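/- Let X be a real Hilbert space, a : X × X → ℝ a symmetric, continuous bilinear form that is coercive (there exists κ > 0 with κ‖z‖² ≤ a(z,z) for all z ∈ X), b : X → ℝ a continuous linear functional, and ψ : X → ℝ ∪ {∞} a convex, proper, lower semi-continuous functional. Then there exists a unique u ∈ X satisfying the variational inequality b(z−u) ≤ a(u, z−u) + ψ(z) − ψ(u) for all z ∈ X. -/
import Mathlib

open Filter Topology

lemma affine_minorant {X : Type*} [NormedAddCommGroup X] [NormedSpace ℝ X]
    (ψ : X → EReal)
    (hconv : ∀ x y : X, ∀ t : ℝ, 0 ≤ t → t ≤ 1 →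
      ψ (t • x + (1 - t) • y) ≤ (t : EReal) * ψ x + ((1 - t : ℝ) : EReal) * ψ y)
    (hproper : ∃ x, ψ x ≠ ⊤) (hnbot : ∀ x, ψ x ≠ ⊥)
    (hlsc : LowerSemicontinuous ψ) :
    ∃ (g : X →L[ℝ] ℝ) (c : ℝ), ∀ z, ((g z + c : ℝ) : EReal) ≤ ψ z := by
  obtain ⟨x₀, hx₀⟩ := hproper
  set r₀ : ℝ := (ψ x₀).toReal with hr₀
  have hψx₀ : ψ x₀ = (r₀ : EReal) := (EReal.coe_toReal hx₀ (hnbot x₀)).symm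
  set E : Set (X × ℝ) := {p | ψ p.1 ≤ (p.2 : EReal)} with hE
  have hEclosed : IsClosed E := by
    have h1 : IsClosed {q : X × EReal | ψ q.1 ≤ q.2} := hlsc.isClosed_epigraph
    have h2 : E = (fun p : X × ℝ => (p.1, (p.2 : EReal))) ⁻¹' {q : X × EReal | ψ q.1 ≤ q.2} := rfl
    rw [h2]
    exact h1.preimage (continuous_fst.prodMk (continuous_coe_real_ereal.comp continuous_snd))
  have hEconv : Convex ℝ E := by
    rintro p hp q hq s t hs ht hst
    have hps : ψ p.1 ≠ ⊤ := ne_top_of_le_ne_top (EReal.coe_ne_top _) hp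
    have hqs : ψ q.1 ≠ ⊤ := ne_top_of_le_ne_top (EReal.coe_ne_top _) hq
    have hpe : ψ p.1 = ((ψ p.1).toReal : EReal) := (EReal.coe_toReal hps (hnbot _)).symm
    have hqe : ψ q.1 = ((ψ q.1).toReal : EReal) := (EReal.coe_toReal hqs (hnbot _)).symm
    have hp2 : ψ p.1 ≤ (p.2 : EReal) := hp
    have hq2 : ψ q.1 ≤ (q.2 : EReal) := hq
    rw [hpe] at hp2; rw [hqe] at hq2
    have hp' : (ψ p.1).toReal ≤ p.2 := EReal.coe_le_coe_iff.1 hp2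
    have hq' : (ψ q.1).toReal ≤ q.2 := EReal.coe_le_coe_iff.1 hq2
    have h1s : (1 : ℝ) - s = t := by linarith
    have hc := hconv p.1 q.1 s hs (by linarith)
    rw [h1s, hpe, hqe] at hc
    have hc2 : ψ (s • p.1 + t • q.1) ≤ ((s * (ψ p.1).toReal + t * (ψ q.1).toReal : ℝ) : EReal) := by
      rw [EReal.coe_add, EReal.coe_mul, EReal.coe_mul]; exact hc
    show ψ (s • p + t • q).1 ≤ (((s • p + t • q).2 : ℝ) : EReal)
    have : (s • p + t • q).1 = s • p.1 + t • q.1 := rfl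
    rw [this]
    refine hc2.trans ?_
    rw [EReal.coe_le_coe_iff]
    show s * (ψ p.1).toReal + t * (ψ q.1).toReal ≤ s * p.2 + t * q.2
    gcongr
  have hnotmem : (x₀, r₀ - 1) ∉ E := by
    intro h
    have : ψ x₀ ≤ ((r₀ - 1 : ℝ) : EReal) := h
    rw [hψx₀, EReal.coe_le_coe_iff] at this
    linarith
  obtain ⟨f, μ, hfμ, hEμ⟩ := geometric_hahn_banach_point_closed hEconv hEclosed hnotmem
  set β : ℝ := f (0, 1) with hβdef
  set g : X →L[ℝ] ℝ := f.comp (ContinuousLinearMap.inl ℝ X ℝ) with hgdef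
  have hkey : ∀ (z : X) (t : ℝ), f (z, t) = g z + t * β := by
    intro z t
    have h1 : (z, t) = (z, (0:ℝ)) + t • ((0:X), (1:ℝ)) := by
      simp [Prod.ext_iff]
    rw [h1, map_add, map_smul, smul_eq_mul]
    rfl
  have hmem₀ : (x₀, r₀) ∈ E := by
    show ψ x₀ ≤ ((r₀ : ℝ) : EReal); exact hψx₀.le
  have hβpos : 0 < β := by
    have h1 := hEμ _ hmem₀
    rw [hkey] at h1 hfμ
    nlinarith
  refine ⟨(-β⁻¹) • g, μ / β, fun z => ?_⟩
  by_cases hz : ψ z = ⊤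
  · rw [hz]; exact le_top
  have hze : ψ z = ((ψ z).toReal : EReal) := (EReal.coe_toReal hz (hnbot z)).symm
  have hmem : (z, (ψ z).toReal) ∈ E := by
    show ψ z ≤ (((ψ z).toReal : ℝ) : EReal); exact hze.le
  have h1 := hEμ _ hmem
  rw [hkey] at h1
  rw [hze, EReal.coe_le_coe_iff]
  have h2 : (-β⁻¹ • g) z = -β⁻¹ * g z := rfl
  rw [h2]
  have h3 : μ - g z ≤ (ψ z).toReal * β := by linarith
  have h4 : (μ - g z) / β ≤ (ψ z).toReal := by
    rw [div_le_iff₀ hβpos]; linarith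
  have h5 : -β⁻¹ * g z + μ / β = (μ - g z) / β := by
    field_simp
    ring
  linarith [h4, h5.le, h5.ge]

set_option maxHeartbeats 2000000 in
/-- Existence and uniqueness of the solution of a variational inequality of the
second kind: `X` a real Hilbert space, `a` a symmetric continuous coercive
bilinear form, `b` a continuous linear functional, `ψ : X → ℝ ∪ {∞}` convex,
proper and lower semi-continuous. The inequality
`b(z−u) ≤ a(u,z−u) + ψ(z) − ψ(u)` is stated additively in `EReal` as
`b(z−u) + ψ(u) ≤ a(u,z−u) + ψ(z)`. -/
theorem stmt_0 {X : Type*} [NormedAddCommGroup X] [InnerProductSpace ℝ X]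
    [CompleteSpace X]
    (a : X →L[ℝ] X →L[ℝ] ℝ) (b : X →L[ℝ] ℝ) (ψ : X → EReal)
    (hsym : ∀ x y, a x y = a y x)
    (κ : ℝ) (hκ : 0 < κ) (hcoer : ∀ z : X, κ * ‖z‖ ^ 2 ≤ a z z)
    (hconv : ∀ x y : X, ∀ t : ℝ, 0 ≤ t → t ≤ 1 →
      ψ (t • x + (1 - t) • y) ≤ (t : EReal) * ψ x + ((1 - t : ℝ) : EReal) * ψ y)
    (hproper : ∃ x, ψ x ≠ ⊤) (hnbot : ∀ x, ψ x ≠ ⊥)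
    (hlsc : LowerSemicontinuous ψ) :
    ∃! u : X, ∀ z : X,
      ((b (z - u) : ℝ) : EReal) + ψ u ≤ ((a u (z - u) : ℝ) : EReal) + ψ z := by
  obtain ⟨g, c, hmin⟩ := affine_minorant ψ hconv hproper hnbot hlsc
  obtain ⟨x₀, hx₀⟩ := hproper
  obtain ⟨ψr, hψrdef⟩ : ∃ f : X → ℝ, f = fun z => (ψ z).toReal := ⟨_, rfl⟩
  have hψeq : ∀ z, ψ z ≠ ⊤ → ψ z = ((ψr z : ℝ) : EReal) := by
    intro z hz; rw [hψrdef]; exact (EReal.coe_toReal hz (hnbot z)).symm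
  obtain ⟨φ, hφ⟩ : ∃ f : X → ℝ, f = fun z => 1/2 * a z z - b z := ⟨_, rfl⟩
  obtain ⟨J, hJ⟩ : ∃ f : X → ℝ, f = fun z => φ z + ψr z := ⟨_, rfl⟩
  have hminr : ∀ z, ψ z ≠ ⊤ → g z + c ≤ ψr z := by
    intro z hz
    have := hmin z
    rw [hψeq z hz, EReal.coe_le_coe_iff] at this
    exact this
  have hφc : Continuous φ := by
    have h1 : Continuous fun z : X => a z z :=
      isBoundedBilinearMap_apply.continuous.comp (a.continuous.prodMk continuous_id)
    rw [hφ]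
    exact (continuous_const.mul h1).sub b.continuous
  -- lower bound for J on the domain of ψ
  obtain ⟨D, hDdef⟩ : ∃ r : ℝ, r = (‖b‖ + ‖g‖) ^ 2 / (2 * κ) := ⟨_, rfl⟩
  have hD : 2 * κ * D = (‖b‖ + ‖g‖) ^ 2 := by rw [hDdef]; field_simp
  have hlb : ∀ z, ψ z ≠ ⊤ → c - D ≤ J z := by
    intro z hz
    have h1 := hminr z hz
    have h2 : |b z| ≤ ‖b‖ * ‖z‖ := by
      have := b.le_opNorm z; rwa [Real.norm_eq_abs] at this
    have h3 : |g z| ≤ ‖g‖ * ‖z‖ := by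
      have := g.le_opNorm z; rwa [Real.norm_eq_abs] at this
    have h4 := hcoer z
    have h5 := (abs_le.1 h2).2
    have h6 := (abs_le.1 h3).1
    have h7 : (0:ℝ) ≤ ‖z‖ := norm_nonneg z
    have hyoung : (‖b‖ + ‖g‖) * ‖z‖ ≤ κ / 2 * ‖z‖ ^ 2 + D := by
      nlinarith [sq_nonneg (κ * ‖z‖ - (‖b‖ + ‖g‖)), hκ, hD, mul_pos hκ hκ]
    simp only [hJ, hφ]
    linarith
  -- the infimum
  obtain ⟨S, hS⟩ : ∃ s : Set ℝ, s = J '' {z | ψ z ≠ ⊤} := ⟨_, rfl⟩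
  have hSne : S.Nonempty := ⟨J x₀, by rw [hS]; exact ⟨x₀, hx₀, rfl⟩⟩
  have hSbdd : BddBelow S := ⟨c - D, by
    rw [hS]; rintro y ⟨z, hz, rfl⟩; exact hlb z hz⟩
  obtain ⟨m, hm⟩ : ∃ r : ℝ, r = sInf S := ⟨_, rfl⟩
  have hmle : ∀ z, ψ z ≠ ⊤ → m ≤ J z := by
    intro z hz
    rw [hm]
    exact csInf_le hSbdd (by rw [hS]; exact ⟨z, hz, rfl⟩)
  -- minimizing sequence
  have hseq : ∀ n : ℕ, ∃ z, ψ z ≠ ⊤ ∧ J z < m + 1/(n+1) := by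
    intro n
    have hpos : (0:ℝ) < 1/(n+1) := by positivity
    have hlt : sInf S < m + 1/(n+1) := by rw [hm]; linarith
    obtain ⟨y, hyS, hy⟩ := exists_lt_of_csInf_lt hSne hlt
    rw [hS] at hyS
    obtain ⟨z, hz, rfl⟩ := hyS
    exact ⟨z, hz, hy⟩
  choose x hxdom hxJ using hseq
  -- midpoint convexity estimate
  have hmid : ∀ p q : X, ψ p ≠ ⊤ → ψ q ≠ ⊤ →
      m + κ/8 * ‖p - q‖^2 ≤ 1/2 * J p + 1/2 * J q := by
    intro p q hp hq
    obtain ⟨w, hw⟩ : ∃ w : X, w = (1/2 : ℝ) • p + (1/2 : ℝ) • q := ⟨_, rfl⟩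
    have hc := hconv p q (1/2) (by norm_num) (by norm_num)
    have h12 : (1 - 1/2 : ℝ) = 1/2 := by norm_num
    rw [h12, hψeq p hp, hψeq q hq, ← hw] at hc
    have hc2 : ψ w ≤ ((1/2 * ψr p + 1/2 * ψr q : ℝ) : EReal) := by
      rw [EReal.coe_add, EReal.coe_mul, EReal.coe_mul]; exact hc
    have hwdom : ψ w ≠ ⊤ := ne_top_of_le_ne_top (EReal.coe_ne_top _) hc2
    have hwψ : ψr w ≤ 1/2 * ψr p + 1/2 * ψr q := by
      rw [hψeq w hwdom, EReal.coe_le_coe_iff] at hc2; exact hc2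
    have hφmid : φ w = 1/2 * φ p + 1/2 * φ q - 1/8 * a (p - q) (p - q) := by
      simp only [hφ, hw, map_add, map_smul, map_sub, ContinuousLinearMap.add_apply,
        ContinuousLinearMap.smul_apply, ContinuousLinearMap.sub_apply,
        ContinuousLinearMap.coe_smul', Pi.smul_apply, ContinuousLinearMap.coe_sub',
        Pi.sub_apply, smul_eq_mul]
      ring_nf
      try linarith [hsym p q]
    have hcoer' := hcoer (p - q)
    have h1 : m ≤ J w := hmle w hwdom
    have h2 : J w ≤ 1/2 * J p + 1/2 * J q - 1/8 * a (p-q) (p-q) := by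
      simp only [hJ]
      rw [hφmid]
      linarith
    nlinarith
  -- the sequence is Cauchy
  have hcauchy : CauchySeq x := by
    rw [Metric.cauchySeq_iff']
    intro ε hε
    obtain ⟨N, hN⟩ := exists_nat_one_div_lt (show (0:ℝ) < κ * ε^2 / 8 by positivity)
    refine ⟨N, fun n hn => ?_⟩
    have key := hmid (x n) (x N) (hxdom n) (hxdom N)
    have h1 : J (x n) < m + 1/(n+1) := hxJ n
    have h2 : J (x N) < m + 1/(N+1) := hxJ N
    have h3 : (1:ℝ)/(n+1) ≤ 1/(N+1) := by
      apply one_div_le_one_div_of_le (by positivity)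
      exact_mod_cast by omega
    have h4 : κ/8 * ‖x n - x N‖^2 ≤ 1/(N+1) := by linarith
    have h5 : (1:ℝ)/(N+1) < κ * ε^2/8 := hN
    have h6 : ‖x n - x N‖^2 < ε^2 := by nlinarith
    rw [dist_eq_norm]
    nlinarith [norm_nonneg (x n - x N)]
  obtain ⟨u, hux⟩ := cauchySeq_tendsto_of_complete hcauchy
  -- lower semicontinuity: ψ u ≤ m - φ u
  have hu2 : ψ u ≤ ((m - φ u : ℝ) : EReal) := by
    by_contra hcon
    push_neg at hcon
    obtain ⟨y, hy1, hy2⟩ := EReal.exists_between_coe_real hcon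
    rw [EReal.coe_lt_coe_iff] at hy1
    have hev : ∀ᶠ n in Filter.atTop, (y : EReal) < ψ (x n) :=
      hux.eventually (hlsc u (y : EReal) hy2)
    have hev2 : ∀ᶠ n in Filter.atTop, φ (x n) + y - 1/(n+1) ≤ m := by
      filter_upwards [hev] with n hn
      have ha1 : y < ψr (x n) := by
        rw [hψeq (x n) (hxdom n), EReal.coe_lt_coe_iff] at hn; exact hn
      have hJn : J (x n) < m + 1/(n+1) := hxJ n
      rw [hJ] at hJn
      simp only at hJn
      linarith
    have htend : Filter.Tendsto (fun n : ℕ => φ (x n) + y - 1/(n+1)) Filter.atTop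
        (𝓝 (φ u + y - 0)) := by
      exact (((hφc.tendsto u).comp hux).add tendsto_const_nhds).sub
        tendsto_one_div_add_atTop_nhds_zero_nat
    have hle := le_of_tendsto htend hev2
    rw [sub_zero] at hle
    linarith
  have hudom : ψ u ≠ ⊤ := ne_top_of_le_ne_top (EReal.coe_ne_top _) hu2
  have huJ : J u ≤ m := by
    have hr : ψr u ≤ m - φ u := by
      rw [hψeq u hudom, EReal.coe_le_coe_iff] at hu2; exact hu2
    rw [hJ]
    simp only
    linarith
  -- variational inequality for u
  have hVIu : ∀ z : X, ((b (z - u) : ℝ) : EReal) + ψ u ≤ ((a u (z - u) : ℝ) : EReal) + ψ z := by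
    intro z
    by_cases hz : ψ z = ⊤
    · rw [hz, EReal.add_top_of_ne_bot (EReal.coe_ne_bot _)]; exact le_top
    · obtain ⟨v, hv⟩ : ∃ v : X, v = z - u := ⟨_, rfl⟩
      have hφ2 : ∀ t : ℝ, φ (u + t • v) = φ u + t * a u v - t * b v + t^2/2 * a v v := by
        intro t
        simp only [hφ, map_add, map_smul, ContinuousLinearMap.add_apply,
          ContinuousLinearMap.smul_apply, ContinuousLinearMap.coe_smul', Pi.smul_apply,
          smul_eq_mul]
        linear_combination (t / 2) * hsym v u
      have hkey : ∀ t : ℝ, 0 < t → t ≤ 1 →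
          b v + ψr u ≤ a u v + ψr z + t/2 * a v v := by
        intro t ht0 ht1
        have hc := hconv z u t ht0.le ht1
        rw [hψeq z hz, hψeq u hudom] at hc
        have hweq : t • z + (1 - t) • u = u + t • v := by
          rw [hv, smul_sub, sub_smul, one_smul]; abel
        rw [hweq] at hc
        have hc2 : ψ (u + t • v) ≤ ((t * ψr z + (1 - t) * ψr u : ℝ) : EReal) := by
          rw [EReal.coe_add, EReal.coe_mul, EReal.coe_mul]; exact hc
        have hwdom : ψ (u + t • v) ≠ ⊤ := ne_top_of_le_ne_top (EReal.coe_ne_top _) hc2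
        have hwψ : ψr (u + t • v) ≤ t * ψr z + (1 - t) * ψr u := by
          rw [hψeq _ hwdom, EReal.coe_le_coe_iff] at hc2; exact hc2
        have h1 : J u ≤ J (u + t • v) := huJ.trans (hmle _ hwdom)
        rw [hJ] at h1
        simp only at h1
        rw [hφ2 t] at h1
        have h3 : 0 ≤ t * (a u v - b v + t/2 * a v v + ψr z - ψr u) := by nlinarith [h1]
        have h4 : 0 ≤ a u v - b v + t/2 * a v v + ψr z - ψr u := by nlinarith [h3, ht0]
        linarith
      have hvv : 0 ≤ a v v := le_trans (by positivity) (hcoer v)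
      have hfinal : b v + ψr u ≤ a u v + ψr z := by
        by_contra hcon
        push_neg at hcon
        obtain ⟨δ, hδ⟩ : ∃ r : ℝ, r = b v + ψr u - (a u v + ψr z) := ⟨_, rfl⟩
        have hδpos : 0 < δ := by rw [hδ]; linarith
        obtain ⟨t, ht⟩ : ∃ r : ℝ, r = min 1 (δ/(a v v + 1)) := ⟨_, rfl⟩
        have ht0 : 0 < t := by rw [ht]; exact lt_min one_pos (by positivity)
        have ht1 : t ≤ 1 := by rw [ht]; exact min_le_left _ _
        have h1 := hkey t ht0 ht1
        have h3 : t ≤ δ/(a v v + 1) := by rw [ht]; exact min_le_right _ _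
        have h4 : t * a v v ≤ δ/(a v v + 1) * a v v :=
          mul_le_mul_of_nonneg_right h3 hvv
        have h5 : δ/(a v v + 1) * a v v < δ := by
          rw [div_mul_eq_mul_div, div_lt_iff₀ (by positivity)]
          nlinarith
        have h2 : t/2 * a v v < δ := by nlinarith
        rw [hδ] at h2
        linarith
      rw [hv] at hfinal
      rw [hψeq z hz, hψeq u hudom, ← EReal.coe_add, ← EReal.coe_add, EReal.coe_le_coe_iff]
      exact hfinal
  refine ⟨u, hVIu, fun w hw => ?_⟩
  -- uniqueness
  have hwtop : ψ w ≠ ⊤ := by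
    intro hwt
    have h1 := hw x₀
    rw [hwt, EReal.add_top_of_ne_bot (EReal.coe_ne_bot _)] at h1
    rw [hψeq x₀ hx₀, ← EReal.coe_add, top_le_iff] at h1
    exact EReal.coe_ne_top _ h1
  have h1 : b (u - w) + ψr w ≤ a w (u - w) + ψr u := by
    have h := hw u
    rw [hψeq w hwtop, hψeq u hudom, ← EReal.coe_add, ← EReal.coe_add,
      EReal.coe_le_coe_iff] at h
    exact h
  have h2 : b (w - u) + ψr u ≤ a u (w - u) + ψr w := by
    have h := hVIu w
    rw [hψeq w hwtop, hψeq u hudom, ← EReal.coe_add, ← EReal.coe_add,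
      EReal.coe_le_coe_iff] at h
    exact h
  have h3 : b (u - w) + b (w - u) = 0 := by rw [map_sub, map_sub]; ring
  have h4 : a w (u - w) + a u (w - u) = - a (u - w) (u - w) := by
    have e1 := hsym u w
    simp only [map_sub, ContinuousLinearMap.sub_apply]
    linarith
  have h5 := hcoer (u - w)
  have h6 : ‖u - w‖^2 ≤ 0 := by nlinarith
  have h7 : ‖u - w‖ = 0 := by nlinarith [norm_nonneg (u - w)]
  exact (norm_sub_eq_zero_iff.mp h7).symm
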